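/- If there exist t, s ∈ [a,b] with E(t) ≠ E(s), then the function g is strictly convex on ℝ. -/

import Mathlib

open Real Set intervalIntegral

/-- Strict weighted AM–GM for two distinct positive reals. -/
lemma amgm_strict {p q c d : ℝ} (hp : 0 < p) (hq : 0 < q) (hpq : p + q = 1)
    (hc : 0 < c) (hd : 0 < d) (hcd : c ≠ d) : c ^ p * d ^ q < p * c + q * d := by
  have hlog := strictConcaveOn_log_Ioi.2 hc hd hcd hp hq hpq
  simp only [smul_eq_mul] at hlog
  have h1 : c ^ p * d ^ q = Real.exp (p * Real.log c + q * Real.log d) := by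
    rw [Real.exp_add, Real.rpow_def_of_pos hc, Real.rpow_def_of_pos hd, mul_comm p, mul_comm q]
  have h2 : p * c + q * d = Real.exp (Real.log (p * c + q * d)) := by
    rw [Real.exp_log (by positivity)]
  rw [h1, h2]
  exact Real.exp_lt_exp.2 hlog

/-- Context: `a < b`, `E` continuous on `[a,b]`,
`g z = log( (1/(b-a)) * ∫_a^b exp(z * E t) dt )`.
Statement: if there exist `t, s ∈ [a,b]` with `E t ≠ E s`, then `g` is strictly
convex on `ℝ`. -/
theorem stmt_6 (a b : ℝ) (hab : a < b) (E : ℝ → ℝ)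
    (hE : ContinuousOn E (Set.Icc a b))
    (g : ℝ → ℝ)
    (hg : ∀ z : ℝ, g z = Real.log ((1 / (b - a)) * ∫ t in a..b, Real.exp (z * E t)))
    (hne : ∃ t ∈ Set.Icc a b, ∃ s ∈ Set.Icc a b, E t ≠ E s) :
    StrictConvexOn ℝ Set.univ g := by
  obtain ⟨t₀, ht₀, s₀, hs₀, hts⟩ := hne
  set I : ℝ → ℝ := fun z => ∫ t in a..b, Real.exp (z * E t) with hI
  have hcont : ∀ z : ℝ, ContinuousOn (fun t => Real.exp (z * E t)) (Icc a b) := fun z =>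
    Real.continuous_exp.comp_continuousOn (continuousOn_const.mul hE)
  have hint : ∀ z : ℝ, IntervalIntegrable (fun t => Real.exp (z * E t)) MeasureTheory.volume a b :=
    fun z => (hcont z).intervalIntegrable_of_Icc hab.le
  have hIpos : ∀ z : ℝ, 0 < I z := fun z =>
    intervalIntegral_pos_of_pos_on (hint z) (fun t _ => Real.exp_pos _) hab
  apply LinearOrder.strictConvexOn_of_lt convex_univ
  intro x _ y _ hxy p q hp hq hpq
  simp only [smul_eq_mul]
  -- normalized densities
  set u : ℝ → ℝ := fun t => Real.exp (x * E t) / I x with hu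
  set v : ℝ → ℝ := fun t => Real.exp (y * E t) / I y with hv
  have hupos : ∀ t, 0 < u t := fun t => div_pos (Real.exp_pos _) (hIpos x)
  have hvpos : ∀ t, 0 < v t := fun t => div_pos (Real.exp_pos _) (hIpos y)
  -- pointwise AM-GM
  have hle : ∀ t, u t ^ p * v t ^ q ≤ p * u t + q * v t := fun t =>
    Real.geom_mean_le_arith_mean2_weighted hp.le hq.le (hupos t).le (hvpos t).le hpq
  -- strict inequality at some point of [a,b]
  have hstrict : ∃ c ∈ Icc a b, u c ^ p * v c ^ q < p * u c + q * v c := by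
    have huv : u t₀ ≠ v t₀ ∨ u s₀ ≠ v s₀ := by
      by_contra h
      push_neg at h
      obtain ⟨h1, h2⟩ := h
      apply hts
      have e1 : Real.exp (x * E t₀) * I y = Real.exp (y * E t₀) * I x := by
        simp only [hu, hv] at h1; rw [div_eq_div_iff (hIpos x).ne' (hIpos y).ne'] at h1; linarith
      have e2 : Real.exp (x * E s₀) * I y = Real.exp (y * E s₀) * I x := by
        simp only [hu, hv] at h2; rw [div_eq_div_iff (hIpos x).ne' (hIpos y).ne'] at h2; linarith
      have key : Real.exp ((x - y) * E t₀) = Real.exp ((x - y) * E s₀) := by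
        have hx1 : Real.exp ((x - y) * E t₀) = I x / I y := by
          rw [sub_mul, Real.exp_sub, div_eq_div_iff (Real.exp_pos _).ne' (hIpos y).ne']
          linarith [e1]
        have hx2 : Real.exp ((x - y) * E s₀) = I x / I y := by
          rw [sub_mul, Real.exp_sub, div_eq_div_iff (Real.exp_pos _).ne' (hIpos y).ne']
          linarith [e2]
        rw [hx1, hx2]
      have := Real.exp_injective key
      have hxy' : x - y ≠ 0 := sub_ne_zero.2 hxy.ne
      exact mul_left_cancel₀ hxy' this
    rcases huv with h | h
    · exact ⟨t₀, ht₀, amgm_strict hp hq hpq (hupos t₀) (hvpos t₀) h⟩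
    · exact ⟨s₀, hs₀, amgm_strict hp hq hpq (hupos s₀) (hvpos s₀) h⟩
  -- continuity of both sides
  have hcu : ContinuousOn u (Icc a b) := (hcont x).div_const _
  have hcv : ContinuousOn v (Icc a b) := (hcont y).div_const _
  have hcf : ContinuousOn (fun t => u t ^ p * v t ^ q) (Icc a b) := by
    apply ContinuousOn.mul
    · exact (hcu.rpow_const fun t _ => Or.inl (hupos t).ne')
    · exact (hcv.rpow_const fun t _ => Or.inl (hvpos t).ne')
  have hcg : ContinuousOn (fun t => p * u t + q * v t) (Icc a b) :=
    (continuousOn_const.mul hcu).add (continuousOn_const.mul hcv)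
  -- integral strict inequality
  have hIlt : (∫ t in a..b, u t ^ p * v t ^ q) < ∫ t in a..b, (p * u t + q * v t) :=
    integral_lt_integral_of_continuousOn_of_le_of_exists_lt hab hcf hcg
      (fun t _ => hle t) hstrict
  -- RHS integral equals 1
  have hintu : IntervalIntegrable u MeasureTheory.volume a b :=
    hcu.intervalIntegrable_of_Icc hab.le
  have hintv : IntervalIntegrable v MeasureTheory.volume a b :=
    hcv.intervalIntegrable_of_Icc hab.le
  have hrhs : (∫ t in a..b, (p * u t + q * v t)) = 1 := by
    rw [intervalIntegral.integral_add (hintu.const_mul p) (hintv.const_mul q),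
      intervalIntegral.integral_const_mul, intervalIntegral.integral_const_mul]
    have h1 : (∫ t in a..b, u t) = 1 := by
      simp only [hu]
      rw [intervalIntegral.integral_div, div_eq_one_iff_eq (hIpos x).ne']
    have h2 : (∫ t in a..b, v t) = 1 := by
      simp only [hv]
      rw [intervalIntegral.integral_div, div_eq_one_iff_eq (hIpos y).ne']
    rw [h1, h2, mul_one, mul_one, hpq]
  -- LHS integral equals I(px+qy) / (I x ^ p * I y ^ q)
  have hfeq : ∀ t, u t ^ p * v t ^ q
      = Real.exp ((p * x + q * y) * E t) / (I x ^ p * I y ^ q) := by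
    intro t
    rw [hu, hv]
    rw [Real.div_rpow (Real.exp_pos _).le (hIpos x).le,
      Real.div_rpow (Real.exp_pos _).le (hIpos y).le,
      div_mul_div_comm]
    congr 1
    rw [← Real.exp_mul, ← Real.exp_mul, ← Real.exp_add]
    ring_nf
  have hClt : I (p * x + q * y) < I x ^ p * I y ^ q := by
    have hC : 0 < I x ^ p * I y ^ q :=
      mul_pos (Real.rpow_pos_of_pos (hIpos x) p) (Real.rpow_pos_of_pos (hIpos y) q)
    have : (∫ t in a..b, u t ^ p * v t ^ q)
        = I (p * x + q * y) / (I x ^ p * I y ^ q) := by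
      rw [hI]
      simp only [hfeq]
      rw [intervalIntegral.integral_div]
    rw [this, hrhs, div_lt_one hC] at hIlt
    exact hIlt
  -- conclude via logs
  have hC : 0 < I x ^ p * I y ^ q :=
    mul_pos (Real.rpow_pos_of_pos (hIpos x) p) (Real.rpow_pos_of_pos (hIpos y) q)
  rw [hg, hg, hg]
  have hc : (0:ℝ) < 1 / (b - a) := div_pos one_pos (by linarith)
  have hlt2 : Real.log ((1 / (b - a)) * I (p * x + q * y))
      < Real.log ((1 / (b - a)) * (I x ^ p * I y ^ q)) :=
    Real.log_lt_log (mul_pos hc (hIpos _)) (mul_lt_mul_of_pos_left hClt hc)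
  refine hlt2.trans_le (le_of_eq ?_)
  rw [Real.log_mul hc.ne' hC.ne',
    Real.log_mul (Real.rpow_pos_of_pos (hIpos x) p).ne' (Real.rpow_pos_of_pos (hIpos y) q).ne',
    Real.log_rpow (hIpos x), Real.log_rpow (hIpos y),
    Real.log_mul hc.ne' (hIpos x).ne', Real.log_mul hc.ne' (hIpos y).ne']
  linear_combination (-(Real.log (1 / (b - a)))) * hpq
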